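/- Let E be a real Banach space, let t0 < t1 be real numbers with τ = t1 − t0 and midpoint tm = (t0 + t1)/2, and let u : ℝ → E be three times continuously differentiable on an open interval containing [t0, t1]. Then ‖(u(t1) − u(t0))/τ − u'(tm)‖² ≤ (τ³/160) · ∫_{t0}^{t1} ‖u'''(t)‖² dt. -/

import Mathlib

open intervalIntegral

section CSAux

open MeasureTheory

private lemma cs_interval_aux (a b : ℝ) (hab : a ≤ b) (f g : ℝ → ℝ)
    (hf : ContinuousOn f (Set.Icc a b)) (hg : ContinuousOn g (Set.Icc a b)) :
    (∫ t in a..b, f t * g t) ^ 2 ≤ (∫ t in a..b, f t ^ 2) * ∫ t in a..b, g t ^ 2 := by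
  have huIcc : Set.uIcc a b = Set.Icc a b := Set.uIcc_of_le hab
  have hf' : ContinuousOn f (Set.uIcc a b) := huIcc ▸ hf
  have hg' : ContinuousOn g (Set.uIcc a b) := huIcc ▸ hg
  have hfg : IntervalIntegrable (fun t => f t * g t) volume a b :=
    (hf'.mul hg').intervalIntegrable
  have hf2 : IntervalIntegrable (fun t => f t ^ 2) volume a b := by
    exact (hf'.pow 2).intervalIntegrable
  have hg2 : IntervalIntegrable (fun t => g t ^ 2) volume a b := by
    exact (hg'.pow 2).intervalIntegrable
  set A := ∫ t in a..b, f t ^ 2 with hA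
  set B := ∫ t in a..b, f t * g t with hB
  set C := ∫ t in a..b, g t ^ 2 with hC
  have key : ∀ lam : ℝ, 0 ≤ C * (lam * lam) + (-2 * B) * lam + A := by
    intro lam
    have h0 : 0 ≤ ∫ t in a..b, (f t - lam * g t) ^ 2 :=
      intervalIntegral.integral_nonneg hab (fun u _ => sq_nonneg _)
    have heq : (∫ t in a..b, (f t - lam * g t) ^ 2)
        = A + ((-2 * lam) * B + lam ^ 2 * C) := by
      rw [intervalIntegral.integral_congr
        (g := fun t => f t ^ 2 + ((-2 * lam) * (f t * g t) + lam ^ 2 * g t ^ 2))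
        (fun t _ => by ring)]
      rw [intervalIntegral.integral_add hf2 ((hfg.const_mul _).add (hg2.const_mul _)),
        intervalIntegral.integral_add (hfg.const_mul _) (hg2.const_mul _),
        intervalIntegral.integral_const_mul, intervalIntegral.integral_const_mul]
    rw [heq] at h0
    nlinarith [h0]
  have hd := discrim_le_zero key
  rw [discrim] at hd
  nlinarith [hd]

end CSAux

set_option maxHeartbeats 1000000 in
/-- Consistency estimate for the midpoint difference quotient on a single time step:
if `u` is three times continuously differentiable on an open set containing `[t0, t1]`
(with derivatives `u'`, `u''`, `u'''`), then
`‖(u t1 − u t0)/(t1−t0) − u' ((t0+t1)/2)‖² ≤ ((t1−t0)³/160) · ∫_{t0}^{t1} ‖u''' t‖² dt`. -/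
theorem midpoint_difference_quotient_consistency
    {E : Type*} [NormedAddCommGroup E] [NormedSpace ℝ E] [CompleteSpace E]
    (t0 t1 : ℝ) (ht : t0 < t1)
    (u u' u'' u''' : ℝ → E) (s : Set ℝ) (hs : IsOpen s) (hsub : Set.Icc t0 t1 ⊆ s)
    (hderiv1 : ∀ t ∈ s, HasDerivAt u (u' t) t)
    (hderiv2 : ∀ t ∈ s, HasDerivAt u' (u'' t) t)
    (hderiv3 : ∀ t ∈ s, HasDerivAt u'' (u''' t) t)
    (hcont : ContinuousOn u''' s) :
    ‖(t1 - t0)⁻¹ • (u t1 - u t0) - u' ((t0 + t1) / 2)‖ ^ 2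
      ≤ (t1 - t0) ^ 3 / 160 * ∫ t in t0..t1, ‖u''' t‖ ^ 2 := by
  have hτ : (0:ℝ) < t1 - t0 := sub_pos.mpr ht
  have hne : (t1 - t0) ≠ 0 := ne_of_gt hτ
  have hm0 : t0 ≤ (t0 + t1) / 2 := by linarith
  have hm1 : (t0 + t1) / 2 ≤ t1 := by linarith
  have hmem : (t0 + t1) / 2 ∈ Set.Icc t0 t1 := ⟨hm0, hm1⟩
  -- Taylor expansion with integral remainder about the midpoint
  have taylor : ∀ b ∈ Set.Icc t0 t1,
      u b = u ((t0+t1)/2) + (b - (t0+t1)/2) • u' ((t0+t1)/2)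
        + ((b - (t0+t1)/2)^2/2) • u'' ((t0+t1)/2)
        + ∫ σ in ((t0+t1)/2)..b, ((b - σ)^2/2) • u''' σ := by
    intro b hb
    have hsub' : Set.uIcc ((t0+t1)/2) b ⊆ s :=
      (Set.uIcc_subset_Icc hmem hb).trans hsub
    have key : ∀ σ ∈ Set.uIcc ((t0+t1)/2) b,
        HasDerivAt (fun σ => u σ + (b - σ) • u' σ + ((b - σ)^2/2) • u'' σ)
          (((b - σ)^2/2) • u''' σ) σ := by
      intro σ hσ
      have hσs : σ ∈ s := hsub' hσ
      have d1 : HasDerivAt (fun x : ℝ => b - x) (-1) σ := by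
        simpa using (hasDerivAt_id σ).const_sub b
      have d2 : HasDerivAt (fun x : ℝ => (b - x)^2/2) (-(b - σ)) σ := by
        have : HasDerivAt (fun x : ℝ => (b - x)^2/2) (↑2 * (b - σ) ^ (2 - 1) * -1 / 2) σ :=
          (d1.pow 2).div_const 2
        convert this using 1
        ring
      have hsum : HasDerivAt (fun σ => u σ + (b - σ) • u' σ + ((b - σ)^2/2) • u'' σ) _ σ :=
        ((hderiv1 σ hσs).add (d1.smul (hderiv2 σ hσs))).add
        (d2.smul (hderiv3 σ hσs))
      convert hsum using 1
      module
    have hint : IntervalIntegrable (fun σ => ((b - σ)^2/2) • u''' σ)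
        MeasureTheory.volume ((t0+t1)/2) b :=
      (ContinuousOn.smul (Continuous.continuousOn (by fun_prop))
        (hcont.mono hsub')).intervalIntegrable
    have hftc := intervalIntegral.integral_eq_sub_of_hasDerivAt key hint
    simp only [sub_self, ne_eq, OfNat.ofNat_ne_zero, not_false_eq_true, zero_pow, zero_div,
      zero_smul, add_zero] at hftc
    linear_combination (norm := module) -hftc
  have e1 := taylor t1 ⟨ht.le, le_refl t1⟩
  have e0 := taylor t0 ⟨le_refl t0, ht.le⟩
  set R1 := ∫ σ in ((t0+t1)/2)..t1, ((t1 - σ)^2/2) • u''' σ with hR1def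
  set R0 := ∫ σ in ((t0+t1)/2)..t0, ((t0 - σ)^2/2) • u''' σ with hR0def
  -- the difference quotient error is the scaled difference of remainders
  have hDF : (t1 - t0)⁻¹ • (u t1 - u t0) - u' ((t0 + t1) / 2)
      = (t1 - t0)⁻¹ • (R1 - R0) := by
    have hsum : u t1 - u t0 = (t1 - t0) • u' ((t0 + t1) / 2) + (R1 - R0) := by
      linear_combination (norm := module) e1 - e0
    rw [hsum, smul_add, smul_smul, inv_mul_cancel₀ hne, one_smul, add_sub_cancel_left]
  -- continuity facts
  have hcont01 : ContinuousOn u''' (Set.Icc t0 t1) := hcont.mono hsub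
  have hcontN : ContinuousOn (fun t => ‖u''' t‖) (Set.Icc t0 t1) := hcont01.norm
  -- norm bounds on the remainders
  have hb1 : ‖R1‖ ≤ ∫ σ in ((t0+t1)/2)..t1, ((t1 - σ)^2/2) * ‖u''' σ‖ := by
    refine le_trans (intervalIntegral.norm_integral_le_integral_norm hm1) ?_
    refine le_of_eq (intervalIntegral.integral_congr fun σ _ => ?_)
    rw [norm_smul, Real.norm_eq_abs, abs_of_nonneg (by positivity)]
  have hR0symm : R0 = -∫ σ in t0..((t0+t1)/2), ((t0 - σ)^2/2) • u''' σ :=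
    intervalIntegral.integral_symm _ _
  have hb0 : ‖R0‖ ≤ ∫ σ in t0..((t0+t1)/2), ((t0 - σ)^2/2) * ‖u''' σ‖ := by
    rw [hR0symm, norm_neg]
    refine le_trans (intervalIntegral.norm_integral_le_integral_norm hm0) ?_
    refine le_of_eq (intervalIntegral.integral_congr fun σ _ => ?_)
    rw [norm_smul, Real.norm_eq_abs, abs_of_nonneg (by positivity)]
  -- Cauchy-Schwarz on each half interval
  have hIcc1 : Set.Icc ((t0+t1)/2) t1 ⊆ Set.Icc t0 t1 := Set.Icc_subset_Icc hm0 le_rfl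
  have hIcc0 : Set.Icc t0 ((t0+t1)/2) ⊆ Set.Icc t0 t1 := Set.Icc_subset_Icc le_rfl hm1
  have cs1 := cs_interval_aux ((t0+t1)/2) t1 hm1 (fun σ => (t1 - σ)^2/2)
    (fun σ => ‖u''' σ‖) (Continuous.continuousOn (by fun_prop)) (hcontN.mono hIcc1)
  have cs0 := cs_interval_aux t0 ((t0+t1)/2) hm0 (fun σ => (t0 - σ)^2/2)
    (fun σ => ‖u''' σ‖) (Continuous.continuousOn (by fun_prop)) (hcontN.mono hIcc0)
  -- weight integrals
  have W1 : (∫ σ in ((t0+t1)/2)..t1, ((t1 - σ)^2/2)^2) = ((t1 - t0)/2)^5/20 := by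
    calc (∫ σ in ((t0+t1)/2)..t1, ((t1 - σ)^2/2)^2)
        = ∫ σ in ((t0+t1)/2)..t1, (fun x => x^4/4) (t1 - σ) :=
          intervalIntegral.integral_congr (fun σ _ => by simp only []; ring)
      _ = ∫ x in (t1 - t1)..(t1 - (t0+t1)/2), x^4/4 :=
          intervalIntegral.integral_comp_sub_left (fun x => x^4/4) t1
      _ = ((t1 - t0)/2)^5/20 := by
          rw [intervalIntegral.integral_div, integral_pow]
          norm_num
          ring
  have W0 : (∫ σ in t0..((t0+t1)/2), ((t0 - σ)^2/2)^2) = ((t1 - t0)/2)^5/20 := by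
    calc (∫ σ in t0..((t0+t1)/2), ((t0 - σ)^2/2)^2)
        = ∫ σ in t0..((t0+t1)/2), (fun x => x^4/4) (σ - t0) :=
          intervalIntegral.integral_congr (fun σ _ => by simp only []; ring)
      _ = ∫ x in (t0 - t0)..((t0+t1)/2 - t0), x^4/4 :=
          intervalIntegral.integral_comp_sub_right (fun x => x^4/4) t0
      _ = ((t1 - t0)/2)^5/20 := by
          rw [intervalIntegral.integral_div, integral_pow]
          norm_num
          ring
  rw [W1] at cs1
  rw [W0] at cs0
  -- norms squared of remainders
  have hN1 : ‖R1‖^2 ≤ ((t1 - t0)/2)^5/20 * ∫ σ in ((t0+t1)/2)..t1, ‖u''' σ‖^2 :=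
    le_trans (pow_le_pow_left₀ (norm_nonneg _) hb1 2) cs1
  have hN0 : ‖R0‖^2 ≤ ((t1 - t0)/2)^5/20 * ∫ σ in t0..((t0+t1)/2), ‖u''' σ‖^2 :=
    le_trans (pow_le_pow_left₀ (norm_nonneg _) hb0 2) cs0
  -- splitting the integral of ‖u'''‖²
  have hint1 : IntervalIntegrable (fun t => ‖u''' t‖^2) MeasureTheory.volume ((t0+t1)/2) t1 := by
    apply ContinuousOn.intervalIntegrable
    rw [Set.uIcc_of_le hm1]
    exact (hcontN.mono hIcc1).pow 2
  have hint0 : IntervalIntegrable (fun t => ‖u''' t‖^2) MeasureTheory.volume t0 ((t0+t1)/2) := by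
    apply ContinuousOn.intervalIntegrable
    rw [Set.uIcc_of_le hm0]
    exact (hcontN.mono hIcc0).pow 2
  have hsplit : (∫ t in t0..((t0+t1)/2), ‖u''' t‖^2) + (∫ t in ((t0+t1)/2)..t1, ‖u''' t‖^2)
      = ∫ t in t0..t1, ‖u''' t‖^2 :=
    intervalIntegral.integral_add_adjacent_intervals hint0 hint1
  have hJ1 : 0 ≤ ∫ t in ((t0+t1)/2)..t1, ‖u''' t‖^2 :=
    intervalIntegral.integral_nonneg hm1 (fun x _ => by positivity)
  have hJ0 : 0 ≤ ∫ t in t0..((t0+t1)/2), ‖u''' t‖^2 :=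
    intervalIntegral.integral_nonneg hm0 (fun x _ => by positivity)
  -- final assembly
  have hDle : ‖(t1 - t0)⁻¹ • (R1 - R0)‖ ≤ (t1 - t0)⁻¹ * (‖R1‖ + ‖R0‖) := by
    rw [norm_smul, Real.norm_eq_abs, abs_of_pos (inv_pos.mpr hτ)]
    exact mul_le_mul_of_nonneg_left (norm_sub_le _ _) (inv_pos.mpr hτ).le
  rw [hDF]
  set J1 := ∫ t in ((t0+t1)/2)..t1, ‖u''' t‖^2 with hJ1def
  set J0 := ∫ t in t0..((t0+t1)/2), ‖u''' t‖^2 with hJ0def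
  calc ‖(t1 - t0)⁻¹ • (R1 - R0)‖ ^ 2
      ≤ ((t1 - t0)⁻¹ * (‖R1‖ + ‖R0‖))^2 := pow_le_pow_left₀ (norm_nonneg _) hDle 2
    _ = (‖R1‖ + ‖R0‖)^2 / (t1 - t0)^2 := by
        rw [mul_pow, inv_pow, div_eq_mul_inv, mul_comm]
    _ ≤ (2 * (((t1 - t0)/2)^5/20 * J1 + ((t1 - t0)/2)^5/20 * J0)) / (t1 - t0)^2 := by
        have num : (‖R1‖ + ‖R0‖)^2
            ≤ 2 * (((t1 - t0)/2)^5/20 * J1 + ((t1 - t0)/2)^5/20 * J0) := by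
          nlinarith [sq_nonneg (‖R1‖ - ‖R0‖), hN1, hN0]
        gcongr
    _ = (t1 - t0)^3/320 * (J0 + J1) := by
        rw [div_eq_iff (pow_ne_zero 2 hne)]; ring
    _ ≤ (t1 - t0)^3/160 * (J0 + J1) := by nlinarith [pow_pos hτ 3]
    _ = (t1 - t0) ^ 3 / 160 * ∫ t in t0..t1, ‖u''' t‖ ^ 2 := by rw [hsplit]
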